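/- (Main Theorem) Let G be a finite simple graph with adjacency matrix (a_{ij}), let g be an admissible function with g(x) < 1 for all x with d_{S^1}(0,x) > 0, and set c(g) = inf over x with 0 < d_{S^1}(0,x) ≤ π of (2/π)·d_{S^1}(0,x)/(1 − g(x)). If (θ_1,…,θ_n) is a global minimizer of the Kuramoto-type energy f over [0,2π)^n, then the expected cut under randomized rounding satisfies E(θ) ≥ c(g)·MaxCut(G). -/

import Mathlib

open Real Finset MeasureTheory intervalIntegral

/-- The circle distance between angles `x` and `y`:
the minimum over integers `k` of `|x - y - 2πk|`. -/
noncomputable def dS1 (x y : ℝ) : ℝ := ⨅ k : ℤ, |x - y - 2 * Real.pi * k|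

/-- `g : ℝ → ℝ` is admissible: 2π-periodic, even, differentiable, with
`g 0 = 1 = max g` and `g π = -1 = min g`. -/
def Admissible (g : ℝ → ℝ) : Prop :=
  Function.Periodic g (2 * Real.pi) ∧ (∀ x, g (-x) = g x) ∧ Differentiable ℝ g ∧
    g 0 = 1 ∧ (∀ x, g x ≤ 1) ∧ g Real.pi = -1 ∧ (∀ x, -1 ≤ g x)

/-- The approximation constant associated to an admissible function `g`. -/
noncomputable def cg (g : ℝ → ℝ) : ℝ :=
  sInf {y : ℝ | ∃ x : ℝ, 0 < dS1 0 x ∧ dS1 0 x ≤ Real.pi ∧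
    y = (2 / Real.pi) * dS1 0 x / (1 - g x)}

/-- Cut size of the partition (S, Sᶜ): number of edges with exactly one endpoint in S. -/
noncomputable def cutSize {n : ℕ} (a : Fin n → Fin n → ℝ) (S : Finset (Fin n)) : ℝ :=
  (1 / 2) * ∑ i, ∑ j, a i j * (if (i ∈ S) ↔ (j ∈ S) then 0 else 1)

/-- The maximum cut of the graph with adjacency matrix `a`. -/
noncomputable def maxCut {n : ℕ} (a : Fin n → Fin n → ℝ) : ℝ :=
  ⨆ S : Finset (Fin n), cutSize a S

/-- The Kuramoto-type energy of the configuration θ. -/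
noncomputable def energy {n : ℕ} (a : Fin n → Fin n → ℝ) (g : ℝ → ℝ)
    (θ : Fin n → ℝ) : ℝ :=
  ∑ i, ∑ j, a i j * g (θ i - θ j)

/-- The size of the cut induced by the line through the origin at angle `φ`. -/
noncomputable def cutAt {n : ℕ} (a : Fin n → Fin n → ℝ) (θ : Fin n → ℝ) (φ : ℝ) : ℝ :=
  (1 / 2) * ∑ i, ∑ j, a i j *
    (if Real.sin (θ i - φ) * Real.sin (θ j - φ) < 0 then 1 else 0)

/-- The expected cut under randomized rounding of the configuration θ. -/
noncomputable def expCut {n : ℕ} (a : Fin n → Fin n → ℝ) (θ : Fin n → ℝ) : ℝ :=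
  (1 / Real.pi) * ∫ φ in (0:ℝ)..Real.pi, cutAt a θ φ

noncomputable def nd (z : ℝ) : ℝ := |z - 2 * Real.pi * round (z / (2 * Real.pi))|

lemma nd_nonneg (z : ℝ) : 0 ≤ nd z := abs_nonneg _

lemma nd_le_pi (z : ℝ) : nd z ≤ Real.pi := by
  have hπ : (0:ℝ) < Real.pi := Real.pi_pos
  have h := abs_sub_round (z / (2 * Real.pi))
  have h2 : z - 2 * Real.pi * round (z / (2 * Real.pi))
      = (2 * Real.pi) * (z / (2 * Real.pi) - round (z / (2 * Real.pi))) := by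
    field_simp
  rw [nd, h2, abs_mul, abs_of_pos (by linarith : (0:ℝ) < 2 * Real.pi)]
  nlinarith [abs_nonneg (z / (2 * Real.pi) - (round (z / (2 * Real.pi)) : ℝ))]

lemma iInf_abs_eq (z : ℝ) : (⨅ k : ℤ, |z - 2 * Real.pi * k|) = nd z := by
  have hπ : (0:ℝ) < Real.pi := Real.pi_pos
  set k₀ : ℤ := round (z / (2 * Real.pi)) with hk₀
  have hbdd : BddBelow (Set.range fun k : ℤ => |z - 2 * Real.pi * k|) :=
    ⟨0, by rintro y ⟨k, rfl⟩; exact abs_nonneg _⟩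
  apply le_antisymm
  · exact ciInf_le hbdd k₀
  · refine le_ciInf fun k => ?_
    rcases eq_or_ne k k₀ with rfl | hne
    · exact le_refl _
    · have h1 : (1:ℝ) ≤ |(k - k₀ : ℤ)| := by
        exact_mod_cast Int.one_le_abs (by omega : k - k₀ ≠ 0)
      have h1' : (1:ℝ) ≤ |(k:ℝ) - k₀| := by push_cast at h1 ⊢; exact h1
      have hr : nd z ≤ Real.pi := nd_le_pi z
      have key : |z - 2 * Real.pi * k| = |(z - 2 * Real.pi * k₀) - 2 * Real.pi * ((k:ℝ) - k₀)| := by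
        ring_nf
      rw [key]
      have := abs_sub_abs_le_abs_sub (2 * Real.pi * ((k:ℝ) - k₀)) (z - 2 * Real.pi * k₀)
      have habs : |2 * Real.pi * ((k:ℝ) - k₀)| = 2 * Real.pi * |(k:ℝ) - k₀| := by
        rw [abs_mul, abs_of_pos (by linarith : (0:ℝ) < 2 * Real.pi)]
      have h3 : |(z - 2 * Real.pi * k₀) - 2 * Real.pi * ((k:ℝ) - k₀)|
          = |2 * Real.pi * ((k:ℝ) - k₀) - (z - 2 * Real.pi * k₀)| := by
        rw [abs_sub_comm]
      rw [h3]
      have hnd : |z - 2 * Real.pi * (k₀:ℝ)| = nd z := rfl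
      rw [hnd] at this
      nlinarith

lemma dS1_eq_nd (x y : ℝ) : dS1 x y = nd (x - y) := iInf_abs_eq (x - y)

lemma nd_neg (z : ℝ) : nd (-z) = nd z := by
  have h1 : dS1 0 z = nd (-z) := by
    have := dS1_eq_nd 0 z; simpa using this
  have h2 : dS1 z 0 = nd z := by
    have := dS1_eq_nd z 0; simpa using this
  rw [← h1, ← h2]
  unfold dS1
  apply le_antisymm
  · refine le_ciInf fun k => ?_
    have he : |0 - z - 2 * Real.pi * ((-k : ℤ) : ℝ)| = |z - 0 - 2 * Real.pi * k| := by
      push_cast; rw [← abs_neg]; ring_nf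
    calc (⨅ m : ℤ, |0 - z - 2 * Real.pi * m|) ≤ |0 - z - 2 * Real.pi * ((-k : ℤ) : ℝ)| :=
          ciInf_le ⟨0, by rintro y ⟨m, rfl⟩; exact abs_nonneg _⟩ (-k)
      _ = _ := he
  · refine le_ciInf fun k => ?_
    have he : |z - 0 - 2 * Real.pi * ((-k : ℤ) : ℝ)| = |0 - z - 2 * Real.pi * k| := by
      push_cast; rw [← abs_neg]; ring_nf
    calc (⨅ m : ℤ, |z - 0 - 2 * Real.pi * m|) ≤ |z - 0 - 2 * Real.pi * ((-k : ℤ) : ℝ)| :=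
          ciInf_le ⟨0, by rintro y ⟨m, rfl⟩; exact abs_nonneg _⟩ (-k)
      _ = _ := he

lemma dS1_zero_eq (x : ℝ) : dS1 0 x = nd x := by
  rw [dS1_eq_nd, zero_sub, nd_neg]

lemma cos_nd (z : ℝ) : Real.cos (nd z) = Real.cos z := by
  rw [nd, Real.cos_abs]
  have : z - 2 * Real.pi * round (z / (2 * Real.pi))
      = z - (round (z / (2 * Real.pi)) : ℤ) * (2 * Real.pi) := by ring
  rw [this, Real.cos_sub_int_mul_two_pi]

lemma nd_eq_zero {z : ℝ} (h : nd z = 0) : ∃ k : ℤ, z = 2 * Real.pi * k := by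
  refine ⟨round (z / (2 * Real.pi)), ?_⟩
  have := abs_eq_zero.mp h
  linarith

lemma cut_integral (x y : ℝ) :
    (∫ φ in (0:ℝ)..Real.pi,
      (if Real.sin (x - φ) * Real.sin (y - φ) < 0 then (1:ℝ) else 0)) = dS1 x y := by
  have hπ : (0:ℝ) < Real.pi := Real.pi_pos
  set d : ℝ := nd (x - y) with hd
  have hd0 : 0 ≤ d := nd_nonneg _
  have hdπ : d ≤ Real.pi := nd_le_pi _
  have hcos : Real.cos (x - y) = Real.cos d := (cos_nd (x - y)).symm
  set F : ℝ → ℝ := fun u => if Real.cos d < Real.cos u then (1:ℝ) else 0 with hF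
  have hpt : ∀ φ : ℝ, (if Real.sin (x - φ) * Real.sin (y - φ) < 0 then (1:ℝ) else 0)
      = F (x + y - 2 * φ) := by
    intro φ
    have h1 := Real.cos_sub (x - φ) (y - φ)
    have h2 := Real.cos_add (x - φ) (y - φ)
    have e1 : (x - φ) - (y - φ) = x - y := by ring
    have e2 : (x - φ) + (y - φ) = x + y - 2 * φ := by ring
    rw [e1, hcos] at h1; rw [e2] at h2
    simp only [hF]
    by_cases h : Real.sin (x - φ) * Real.sin (y - φ) < 0
    · rw [if_pos h, if_pos (by nlinarith)]
    · rw [if_neg h, if_neg (by intro hc; exact h (by nlinarith))]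
  rw [intervalIntegral.integral_congr (g := fun φ => F (x + y - 2 * φ)) (fun φ _ => hpt φ)]
  have hper : Function.Periodic F (2 * Real.pi) := by
    intro u; simp only [hF, Real.cos_add_two_pi]
  have step1 : (∫ φ in (0:ℝ)..Real.pi, F (x + y - 2 * φ))
      = ∫ φ in (0:ℝ)..Real.pi, (fun t => F ((x + y) - t)) (2 * φ) := by
    simp
  rw [step1, intervalIntegral.integral_comp_mul_left (fun t => F ((x + y) - t)) two_ne_zero,
    mul_zero]
  rw [intervalIntegral.integral_comp_sub_left F (x + y)]
  have h2 : (∫ u in ((x + y) - 2 * Real.pi)..((x + y) - 0), F u)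
      = ∫ u in (-Real.pi)..Real.pi, F u := by
    have hp := hper.intervalIntegral_add_eq ((x + y) - 2 * Real.pi) (-Real.pi)
    have e1 : (x + y) - 2 * Real.pi + 2 * Real.pi = (x + y) - 0 := by ring
    have e2 : -Real.pi + 2 * Real.pi = Real.pi := by ring
    rw [e1, e2] at hp
    exact hp
  rw [h2]
  have h3 : (∫ u in (-Real.pi)..Real.pi, F u) = 2 * d := by
    have hcongr : Set.EqOn F
        (fun u => Set.indicator (Set.Ioo (-d) d) (fun _ => (1:ℝ)) u)
        (Set.uIcc (-Real.pi) Real.pi) := by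
      intro u hu
      rw [Set.uIcc_of_le (by linarith)] at hu
      obtain ⟨hu1, hu2⟩ := hu
      have habs : |u| ≤ Real.pi := abs_le.mpr ⟨hu1, hu2⟩
      have hiff : Real.cos d < Real.cos u ↔ (-d < u ∧ u < d) := by
        constructor
        · intro h
          by_contra hc
          have hdu : d ≤ |u| := by
            rcases not_and_or.mp hc with h1 | h2
            · push_neg at h1
              calc d ≤ -u := by linarith
                _ ≤ |u| := neg_le_abs u
            · push_neg at h2; exact h2.trans (le_abs_self u)
          have := Real.cos_le_cos_of_nonneg_of_le_pi hd0 habs hdu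
          rw [Real.cos_abs] at this; linarith
        · rintro ⟨hl, hr⟩
          have hlt : |u| < d := abs_lt.mpr ⟨hl, hr⟩
          have := Real.cos_lt_cos_of_nonneg_of_le_pi (abs_nonneg u) hdπ hlt
          rwa [Real.cos_abs] at this
      simp only [hF, Set.indicator_apply, Set.mem_Ioo]
      rw [if_congr hiff rfl rfl]
    rw [intervalIntegral.integral_congr hcongr]
    rw [intervalIntegral.integral_of_le (by linarith : -Real.pi ≤ Real.pi)]
    rw [MeasureTheory.setIntegral_indicator measurableSet_Ioo]
    have hsub : Set.Ioc (-Real.pi) Real.pi ∩ Set.Ioo (-d) d = Set.Ioo (-d) d := by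
      apply Set.inter_eq_right.mpr
      intro u hu
      exact ⟨by linarith [hu.1], by linarith [hu.2]⟩
    rw [hsub, MeasureTheory.setIntegral_const, Real.volume_real_Ioo_of_le (by linarith), smul_eq_mul,
      mul_one]
    ring
  rw [h3, smul_eq_mul, dS1_eq_nd]
  ring

lemma cut_integrable (x y : ℝ) :
    IntervalIntegrable
      (fun φ => if Real.sin (x - φ) * Real.sin (y - φ) < 0 then (1:ℝ) else 0)
      MeasureTheory.volume 0 Real.pi := by
  have hA : MeasurableSet {φ : ℝ | Real.sin (x - φ) * Real.sin (y - φ) < 0} := by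
    apply measurableSet_lt
    · exact ((Real.continuous_sin.comp (continuous_const.sub continuous_id)).mul
        (Real.continuous_sin.comp (continuous_const.sub continuous_id))).measurable
    · exact measurable_const
  have heq : (fun φ => if Real.sin (x - φ) * Real.sin (y - φ) < 0 then (1:ℝ) else 0)
      = Set.indicator {φ : ℝ | Real.sin (x - φ) * Real.sin (y - φ) < 0} (fun _ => (1:ℝ)) := by
    funext φ
    simp [Set.indicator_apply]
  rw [heq, intervalIntegrable_iff]
  apply MeasureTheory.Integrable.indicator _ hA
  have : MeasureTheory.IntegrableOn (fun _ => (1:ℝ)) (Set.uIoc 0 Real.pi) MeasureTheory.volume := by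
    apply (MeasureTheory.integrableOn_const_iff (C := (1:ℝ))).mpr
    right
    rw [Set.uIoc_of_le Real.pi_pos.le]
    exact measure_Ioc_lt_top
  exact this
lemma expCut_eq {n : ℕ} (a : Fin n → Fin n → ℝ) (θ : Fin n → ℝ) :
    expCut a θ = (1 / (2 * Real.pi)) * ∑ i, ∑ j, a i j * dS1 (θ i) (θ j) := by
  unfold expCut cutAt
  rw [intervalIntegral.integral_const_mul]
  have hint : ∀ i j : Fin n, IntervalIntegrable
      (fun φ => a i j * (if Real.sin (θ i - φ) * Real.sin (θ j - φ) < 0 then (1:ℝ) else 0))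
      MeasureTheory.volume 0 Real.pi := fun i j => (cut_integrable (θ i) (θ j)).const_mul _
  rw [intervalIntegral.integral_finset_sum
    (f := fun (i : Fin n) (φ : ℝ) => ∑ j,
      a i j * (if Real.sin (θ i - φ) * Real.sin (θ j - φ) < 0 then (1:ℝ) else 0))
    (fun i _ => by
      show IntervalIntegrable (fun φ : ℝ => ∑ j,
        a i j * (if Real.sin (θ i - φ) * Real.sin (θ j - φ) < 0 then (1:ℝ) else 0))
        MeasureTheory.volume 0 Real.pi
      have heq : (fun φ : ℝ => ∑ j,
          a i j * (if Real.sin (θ i - φ) * Real.sin (θ j - φ) < 0 then (1:ℝ) else 0))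
          = ∑ j ∈ Finset.univ, (fun φ : ℝ =>
            a i j * (if Real.sin (θ i - φ) * Real.sin (θ j - φ) < 0 then (1:ℝ) else 0)) := by
        funext φ
        rw [Finset.sum_apply]
      rw [heq]
      exact IntervalIntegrable.sum Finset.univ (fun j _ => hint i j))]
  have hin : ∀ i : Fin n,
      (∫ φ in (0:ℝ)..Real.pi, ∑ j,
        a i j * (if Real.sin (θ i - φ) * Real.sin (θ j - φ) < 0 then (1:ℝ) else 0))
      = ∑ j, a i j * dS1 (θ i) (θ j) := by
    intro i
    rw [intervalIntegral.integral_finset_sum (fun j _ => hint i j)]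
    refine Finset.sum_congr rfl fun j _ => ?_
    rw [intervalIntegral.integral_const_mul, cut_integral]
  rw [Finset.sum_congr rfl fun i _ => hin i]
  ring
theorem stmt6 (n : ℕ) (a : Fin n → Fin n → ℝ)
    (hsymm : ∀ i j, a i j = a j i)
    (h01 : ∀ i j, a i j = 0 ∨ a i j = 1)
    (hdiag : ∀ i, a i i = 0)
    (g : ℝ → ℝ) (hg : Admissible g)
    (hlt : ∀ x, 0 < dS1 0 x → g x < 1)
    (θ : Fin n → ℝ) (hθ : ∀ i, θ i ∈ Set.Ico 0 (2 * Real.pi))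
    (hmin : ∀ ψ : Fin n → ℝ, (∀ i, ψ i ∈ Set.Ico 0 (2 * Real.pi)) →
      energy a g θ ≤ energy a g ψ) :
    expCut a θ ≥ cg g * maxCut a := by
  obtain ⟨hper, heven, -, hg0, hg1, hgπ, hgm1⟩ := hg
  have hπ : (0:ℝ) < Real.pi := Real.pi_pos
  have ha : ∀ i j, 0 ≤ a i j := fun i j => by rcases h01 i j with h | h <;> rw [h] <;> norm_num
  have hmem_nonneg : ∀ y ∈ {y : ℝ | ∃ x : ℝ, 0 < dS1 0 x ∧ dS1 0 x ≤ Real.pi ∧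
      y = (2 / Real.pi) * dS1 0 x / (1 - g x)}, 0 ≤ y := by
    rintro y ⟨x, hx0, hxπ, rfl⟩
    have hgx : g x < 1 := hlt x hx0
    apply div_nonneg _ (by linarith)
    apply mul_nonneg (by positivity) (le_of_lt hx0)
  have hcg0 : 0 ≤ cg g := Real.sInf_nonneg hmem_nonneg
  have hbdd : BddBelow {y : ℝ | ∃ x : ℝ, 0 < dS1 0 x ∧ dS1 0 x ≤ Real.pi ∧
      y = (2 / Real.pi) * dS1 0 x / (1 - g x)} := ⟨0, hmem_nonneg⟩
  -- pairwise inequality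
  have hpair : ∀ i j, cg g * (1 - g (θ i - θ j)) ≤ 2 / Real.pi * dS1 (θ i) (θ j) := by
    intro i j
    set x := θ i - θ j with hx
    have hdx : dS1 0 x = dS1 (θ i) (θ j) := by rw [dS1_zero_eq, dS1_eq_nd]
    rcases eq_or_lt_of_le (nd_nonneg x) with h0 | hpos
    · obtain ⟨k, hk⟩ := nd_eq_zero h0.symm
      have h2 := (hper.int_mul k) 0
      rw [zero_add] at h2
      have hgx : g x = 1 := by
        rw [hk, (by ring : 2 * Real.pi * (k:ℝ) = (k:ℝ) * (2 * Real.pi)), h2, hg0]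
      have hd0 : dS1 (θ i) (θ j) = 0 := by rw [← hdx, dS1_zero_eq, ← h0]
      rw [hgx, hd0]
      simp
    · have hx0 : 0 < dS1 0 x := by rw [dS1_zero_eq]; exact hpos
      have hgx : g x < 1 := hlt x hx0
      have hle : cg g ≤ 2 / Real.pi * dS1 0 x / (1 - g x) :=
        csInf_le hbdd ⟨x, hx0, by rw [dS1_zero_eq]; exact nd_le_pi x, rfl⟩
      rw [← hdx]
      calc cg g * (1 - g x)
          ≤ (2 / Real.pi * dS1 0 x / (1 - g x)) * (1 - g x) :=
            mul_le_mul_of_nonneg_right hle (by linarith)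
        _ = 2 / Real.pi * dS1 0 x :=
            div_mul_cancel₀ _ (by intro hc; rw [sub_eq_zero] at hc; exact absurd hc.symm (ne_of_lt hgx))
  -- each cut gives a lower bound
  have hcut : ∀ S : Finset (Fin n), cg g * cutSize a S ≤ expCut a θ := by
    intro S
    set ψ : Fin n → ℝ := fun i => if i ∈ S then 0 else Real.pi with hψ
    have hψdom : ∀ i, ψ i ∈ Set.Ico 0 (2 * Real.pi) := by
      intro i
      by_cases hi : i ∈ S <;> simp only [hψ, hi, if_true, if_false] <;>
        exact ⟨by linarith, by linarith⟩
    have hterm : ∀ i j, a i j * g (ψ i - ψ j)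
        = a i j - 2 * (a i j * (if (i ∈ S) ↔ (j ∈ S) then 0 else 1)) := by
      intro i j
      by_cases hi : i ∈ S <;> by_cases hj : j ∈ S <;>
        simp [hψ, hi, hj, hg0, hgπ, heven] <;> ring
    have henergy : energy a g ψ = (∑ i, ∑ j, a i j) - 4 * cutSize a S := by
      unfold energy cutSize
      rw [Finset.sum_congr rfl fun i _ => Finset.sum_congr rfl fun j _ => hterm i j]
      rw [Finset.sum_congr rfl fun i (_ : i ∈ Finset.univ) => Finset.sum_sub_distrib _ _]
      rw [Finset.sum_sub_distrib]
      rw [Finset.sum_congr rfl fun i (_ : i ∈ Finset.univ) => (Finset.mul_sum _ _ _).symm]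
      rw [← Finset.mul_sum]
      ring
    have hQ : 4 * cutSize a S ≤ ∑ i, ∑ j, a i j * (1 - g (θ i - θ j)) := by
      have h := hmin ψ hψdom
      rw [henergy] at h
      have hexp : ∑ i, ∑ j, a i j * (1 - g (θ i - θ j))
          = (∑ i, ∑ j, a i j) - energy a g θ := by
        unfold energy
        rw [← Finset.sum_sub_distrib]
        refine Finset.sum_congr rfl fun i _ => ?_
        rw [← Finset.sum_sub_distrib]
        refine Finset.sum_congr rfl fun j _ => ?_
        ring
      rw [hexp]
      linarith
    have hsum : cg g * (∑ i, ∑ j, a i j * (1 - g (θ i - θ j)))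
        ≤ 2 / Real.pi * ∑ i, ∑ j, a i j * dS1 (θ i) (θ j) := by
      rw [Finset.mul_sum, Finset.mul_sum]
      refine Finset.sum_le_sum fun i _ => ?_
      rw [Finset.mul_sum, Finset.mul_sum]
      refine Finset.sum_le_sum fun j _ => ?_
      have h1 := hpair i j
      have h2 := ha i j
      have e1 : cg g * (a i j * (1 - g (θ i - θ j)))
          = a i j * (cg g * (1 - g (θ i - θ j))) := by ring
      have e2 : 2 / Real.pi * (a i j * dS1 (θ i) (θ j))
          = a i j * (2 / Real.pi * dS1 (θ i) (θ j)) := by ring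
      rw [e1, e2]
      exact mul_le_mul_of_nonneg_left h1 h2
    rw [expCut_eq]
    have hring : 2 / Real.pi * ∑ i, ∑ j, a i j * dS1 (θ i) (θ j)
        = 4 * (1 / (2 * Real.pi) * ∑ i, ∑ j, a i j * dS1 (θ i) (θ j)) := by
      ring
    have h4 := mul_le_mul_of_nonneg_left hQ hcg0
    rw [hring] at hsum
    linarith
  rcases eq_or_lt_of_le hcg0 with h0 | hpos
  · rw [← h0, zero_mul]
    have := hcut ∅
    rw [← h0, zero_mul] at this
    exact this
  · have hsup : maxCut a ≤ expCut a θ / cg g := by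
      apply ciSup_le
      intro S
      rw [le_div_iff₀ hpos, mul_comm]
      exact hcut S
    calc cg g * maxCut a
        ≤ cg g * (expCut a θ / cg g) := mul_le_mul_of_nonneg_left hsup (le_of_lt hpos)
      _ = expCut a θ := by field_simp
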